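/- In the multi-region setup, fix a region r with I_r nonempty and a nonnegative integer k. Assume hypotheses (i)–(iv) as follows: (i) for every i ∈ I_r and t ∈ Ī_i, ‖Q_{t,i}ᵀ(L_t − L*_t)e_{f_t^i}‖_{ℓ2} ≤ l₀·σ*_t·qᵏ/√(n_t); (ii) for every t ∈ U_r, E_t = S*_t − S_t has at most α_t·m_t nonzero entries per column and ‖E_t‖_{ℓ∞} ≤ s₀·σ*_t·qᵏ/√(m_t n_t), and additionally E_r has at most α'_r·n_r nonzero entries per row; (iii) ‖P^i_{r,t}‖_2 ≤ √(σ*_r/σ*_t)·(m_t n_t/(m_r n_r))^{1/4}; (iv) ‖Q_{t,i}ᵀe_p‖_{ℓ2} ≤ ν√(d/m_t) for all row indices p. With G_r, F_r, M_r = G_r + F_r + E_r, ω_r, α̃_r defined as in the multi-region setup, for every v ∈ ℝ^{n_r}: ‖M_r v‖_{ℓ∞} ≤ [ s₀·(α'_r + α̃_r·ν²d) + l₀·ν·√d·ω_r ]·σ*_r·qᵏ·√(n_r/m_r)·‖v‖_{ℓ∞}. -/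

import Mathlib

open Matrix
open scoped BigOperators

noncomputable def l2 {n : ℕ} (v : Fin n → ℝ) : ℝ := Real.sqrt (∑ i, v i ^ 2)

noncomputable def vinf {n : ℕ} (v : Fin n → ℝ) : ℝ := ⨆ i, |v i|

noncomputable def linf {m n : ℕ} (X : Matrix (Fin m) (Fin n) ℝ) : ℝ := ⨆ i, ⨆ j, |X i j|

noncomputable def frob {m n : ℕ} (X : Matrix (Fin m) (Fin n) ℝ) : ℝ :=
  Real.sqrt (∑ i, ∑ j, X i j ^ 2)

noncomputable def spec {m n : ℕ} (X : Matrix (Fin m) (Fin n) ℝ) : ℝ :=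
  ‖LinearMap.toContinuousLinearMap (Matrix.toEuclideanLin X)‖

def supp {m n : ℕ} (X : Matrix (Fin m) (Fin n) ℝ) : Set (Fin m × Fin n) :=
  {p | X p.1 p.2 ≠ 0}

noncomputable def sthr {m n : ℕ} (ζ : ℝ) (X : Matrix (Fin m) (Fin n) ℝ) :
    Matrix (Fin m) (Fin n) ℝ :=
  Matrix.of fun i j => Real.sign (X i j) * max (|X i j| - ζ) 0

section helpers

open Matrix

lemma l2_eq_norm' {n : ℕ} (v : Fin n → ℝ) :
    l2 v = ‖(WithLp.equiv 2 (Fin n → ℝ)).symm v‖ := by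
  rw [EuclideanSpace.norm_eq]; simp [l2, sq_abs]

lemma l2_nonneg' {n : ℕ} (v : Fin n → ℝ) : 0 ≤ l2 v := Real.sqrt_nonneg _

lemma abs_dot_le' {n : ℕ} (u w : Fin n → ℝ) : |u ⬝ᵥ w| ≤ l2 u * l2 w := by
  rw [l2_eq_norm', l2_eq_norm']
  have := abs_real_inner_le_norm ((WithLp.equiv 2 (Fin n → ℝ)).symm u)
    ((WithLp.equiv 2 (Fin n → ℝ)).symm w)
  rw [real_inner_comm] at this
  convert this using 2
  simp [dotProduct, PiLp.inner_apply, mul_comm]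

lemma l2_mulVec_le' {m n : ℕ} (X : Matrix (Fin m) (Fin n) ℝ) (v : Fin n → ℝ) :
    l2 (X *ᵥ v) ≤ spec X * l2 v := by
  rw [l2_eq_norm', l2_eq_norm']
  have := (LinearMap.toContinuousLinearMap (Matrix.toEuclideanLin X)).le_opNorm
    ((WithLp.equiv 2 (Fin n → ℝ)).symm v)
  simpa [Matrix.toEuclideanLin_apply_piLp_toLp, spec] using this

lemma l2_smul' {n : ℕ} (c : ℝ) (v : Fin n → ℝ) : l2 (c • v) = |c| * l2 v := by
  rw [l2_eq_norm', l2_eq_norm']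
  have : (WithLp.equiv 2 (Fin n → ℝ)).symm (c • v)
      = c • (WithLp.equiv 2 (Fin n → ℝ)).symm v := rfl
  rw [this, norm_smul]; simp

lemma l2_sum_le' {ι : Type*} {n : ℕ} (s : Finset ι) (g : ι → Fin n → ℝ) :
    l2 (∑ i ∈ s, g i) ≤ ∑ i ∈ s, l2 (g i) := by
  simp only [l2_eq_norm']
  have : (WithLp.equiv 2 (Fin n → ℝ)).symm (∑ i ∈ s, g i)
      = ∑ i ∈ s, (WithLp.equiv 2 (Fin n → ℝ)).symm (g i) :=
    map_sum (WithLp.addEquiv 2 (Fin n → ℝ)).symm g s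
  rw [this]
  exact norm_sum_le _ _

lemma mulVec_decomp' {m n : ℕ} (C : Matrix (Fin m) (Fin n) ℝ) (g : Fin n → ℝ) :
    C *ᵥ g = ∑ p, g p • (C *ᵥ Pi.single p 1) := by
  have hg : g = ∑ p, g p • (Pi.single p (1:ℝ) : Fin n → ℝ) := by
    ext j
    simp [Finset.sum_apply, Pi.single_apply, mul_comm]
  conv_lhs => rw [hg, ← Matrix.mulVecLin_apply, map_sum]
  simp [Matrix.mulVecLin_apply, Matrix.mulVec_smul]

lemma l2_mulVec_sparse {d' m' : ℕ} (C : Matrix (Fin d') (Fin m') ℝ) (g : Fin m' → ℝ)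
    (K c N : ℝ) (hK : ∀ p, l2 (C *ᵥ Pi.single p 1) ≤ K) (hc : ∀ p, |g p| ≤ c)
    (hc0 : 0 ≤ c) (hK0 : 0 ≤ K) (hN0 : 0 ≤ N)
    (hN : ((Finset.univ.filter fun p => g p ≠ 0).card : ℝ) ≤ N) :
    l2 (C *ᵥ g) ≤ N * c * K := by
  rw [mulVec_decomp']
  set s := Finset.univ.filter fun p => g p ≠ 0 with hs
  have hsum : ∑ p, g p • (C *ᵥ Pi.single p 1) = ∑ p ∈ s, g p • (C *ᵥ Pi.single p 1) := by
    symm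
    refine Finset.sum_subset (Finset.subset_univ _) fun p _ hp => ?_
    have : g p = 0 := by
      by_contra h
      exact hp (by simp [hs, h])
    simp [this]
  rw [hsum]
  calc l2 (∑ p ∈ s, g p • (C *ᵥ Pi.single p 1))
      ≤ ∑ p ∈ s, l2 (g p • (C *ᵥ Pi.single p 1)) := l2_sum_le' _ _
    _ = ∑ p ∈ s, |g p| * l2 (C *ᵥ Pi.single p 1) := by simp [l2_smul']
    _ ≤ ∑ _p ∈ s, c * K := by
        refine Finset.sum_le_sum fun p _ => ?_
        exact mul_le_mul (hc p) (hK p) (l2_nonneg' _) hc0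
    _ = (s.card : ℝ) * (c * K) := by simp [mul_comm]
    _ ≤ N * c * K := by
        rw [← mul_assoc]
        exact mul_le_mul_of_nonneg_right (mul_le_mul_of_nonneg_right hN hc0) hK0

lemma entry_bound' {m' mt d' : ℕ} (A : Matrix (Fin m') (Fin d') ℝ)
    (B : Matrix (Fin d') (Fin d') ℝ) (C : Matrix (Fin d') (Fin mt) ℝ)
    (g : Fin mt → ℝ) (p : Fin m') :
    |((A * B * C) *ᵥ g) p| ≤ l2 (Aᵀ *ᵥ Pi.single p 1) * (spec B * l2 (C *ᵥ g)) := by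
  have key : ∀ (w : Fin d' → ℝ), (A *ᵥ w) p = (Aᵀ *ᵥ Pi.single p 1) ⬝ᵥ w := by
    intro w
    simp only [Matrix.mulVec, dotProduct, Matrix.transpose_apply]
    refine Finset.sum_congr rfl fun x _ => ?_
    congr 1
    rw [Finset.sum_eq_single p]
    · simp
    · intro b _ hb; simp [Pi.single_apply, hb]
    · simp
  have h1 : ((A * B * C) *ᵥ g) p = (Aᵀ *ᵥ Pi.single p 1) ⬝ᵥ (B *ᵥ (C *ᵥ g)) := by
    rw [← key, Matrix.mulVec_mulVec, Matrix.mulVec_mulVec, Matrix.mul_assoc]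
  rw [h1]
  calc |(Aᵀ *ᵥ Pi.single p 1) ⬝ᵥ (B *ᵥ (C *ᵥ g))|
      ≤ l2 (Aᵀ *ᵥ Pi.single p 1) * l2 (B *ᵥ (C *ᵥ g)) := abs_dot_le' _ _
    _ ≤ l2 (Aᵀ *ᵥ Pi.single p 1) * (spec B * l2 (C *ᵥ g)) :=
        mul_le_mul_of_nonneg_left (l2_mulVec_le' _ _) (l2_nonneg' _)

lemma spec_nonneg' {m n : ℕ} (X : Matrix (Fin m) (Fin n) ℝ) : 0 ≤ spec X :=
  norm_nonneg _

lemma linf_entry' {m' n' : ℕ} (X : Matrix (Fin m') (Fin n') ℝ) (i : Fin m') (j : Fin n') :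
    |X i j| ≤ linf X := by
  have h1 : |X i j| ≤ ⨆ j', |X i j'| :=
    le_ciSup (f := fun j' => |X i j'|) (Finite.bddAbove_range _) j
  exact h1.trans (le_ciSup (Finite.bddAbove_range fun i' => ⨆ j', |X i' j'|) i)

lemma double_sum_mulVec' {m' n' : ℕ} {ι κ : Type*} (s : Finset ι) (T : ι → Finset κ)
    (a : ι → κ → Fin m' → ℝ) (b : ι → Fin n' → ℝ) (v : Fin n' → ℝ) (p : Fin m') :
    ((∑ i ∈ s, ∑ t ∈ T i, Matrix.vecMulVec (a i t) (b i)) *ᵥ v) p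
      = ∑ i ∈ s, ∑ t ∈ T i, (a i t p) * (b i ⬝ᵥ v) := by
  simp only [Matrix.mulVec, dotProduct, Matrix.sum_apply, Matrix.vecMulVec_apply,
    Finset.sum_mul]
  rw [Finset.sum_comm]
  refine Finset.sum_congr rfl fun i _ => ?_
  rw [Finset.sum_comm]
  refine Finset.sum_congr rfl fun t _ => ?_
  rw [Finset.mul_sum]
  exact Finset.sum_congr rfl fun j _ => by ring

lemma eq_of_pow4' {a b : ℝ} (ha : 0 ≤ a) (hb : 0 ≤ b) (h : a ^ 4 = b ^ 4) : a = b :=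
  (pow_left_strictMonoOn₀ (by norm_num : (4:ℕ) ≠ 0)).injOn ha hb h

lemma sqrt_pow4' {x : ℝ} (hx : 0 ≤ x) : Real.sqrt x ^ 4 = x ^ 2 := by
  rw [show (4:ℕ) = 2 * 2 by rfl, pow_mul, Real.sq_sqrt hx]

lemma rpow4' {x : ℝ} (hx : 0 ≤ x) : (x ^ ((1:ℝ)/4)) ^ 4 = x := by
  rw [← Real.rpow_natCast (x ^ ((1:ℝ)/4)) 4, ← Real.rpow_mul hx]
  norm_num

lemma keyG' (D mt nt mR nR σr σt : ℝ) (hD : 0 ≤ D) (hmt : 0 < mt) (hnt : 0 < nt)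
    (hmR : 0 < mR) (hnR : 0 < nR) (hσr : 0 < σr) (hσt : 0 < σt) :
    nR * (Real.sqrt (D / mR) * (Real.sqrt (σr / σt) * ((mt * nt) / (mR * nR)) ^ ((1:ℝ)/4)) *
      (σt / Real.sqrt nt))
    = Real.sqrt D * σr * Real.sqrt (nR / mR) *
      (Real.sqrt (σt / σr) * ((mt * nR) / (mR * nt)) ^ ((1:ℝ)/4)) := by
  apply eq_of_pow4' (by positivity) (by positivity)
  have h1 : (0:ℝ) ≤ D / mR := by positivity
  have h2 : (0:ℝ) ≤ σr / σt := by positivity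
  have h3 : (0:ℝ) ≤ (mt * nt) / (mR * nR) := by positivity
  have h4 : (0:ℝ) ≤ nR / mR := by positivity
  have h5 : (0:ℝ) ≤ σt / σr := by positivity
  have h6 : (0:ℝ) ≤ (mt * nR) / (mR * nt) := by positivity
  simp only [mul_pow, div_pow, sqrt_pow4' hD, sqrt_pow4' h1, sqrt_pow4' h2, sqrt_pow4' h4,
    sqrt_pow4' h5, rpow4' h3, rpow4' h6, sqrt_pow4' hnt.le]
  field_simp

lemma keyF' (D mt nt mR nR σr σt : ℝ) (hD : 0 ≤ D) (hmt : 0 < mt) (hnt : 0 < nt)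
    (hmR : 0 < mR) (hnR : 0 < nR) (hσr : 0 < σr) (hσt : 0 < σt) :
    nR * (Real.sqrt (D / mR) * (Real.sqrt (σr / σt) * ((mt * nt) / (mR * nR)) ^ ((1:ℝ)/4)) *
      (mt * (σt / Real.sqrt (mt * nt)) * Real.sqrt (D / mt)))
    = D * σr * Real.sqrt (nR / mR) *
      (Real.sqrt (σt / σr) * ((mt * nR) / (mR * nt)) ^ ((1:ℝ)/4)) := by
  apply eq_of_pow4' (by positivity) (by positivity)
  have h1 : (0:ℝ) ≤ D / mR := by positivity
  have h2 : (0:ℝ) ≤ σr / σt := by positivity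
  have h3 : (0:ℝ) ≤ (mt * nt) / (mR * nR) := by positivity
  have h4 : (0:ℝ) ≤ nR / mR := by positivity
  have h5 : (0:ℝ) ≤ σt / σr := by positivity
  have h6 : (0:ℝ) ≤ (mt * nR) / (mR * nt) := by positivity
  have h7 : (0:ℝ) ≤ mt * nt := by positivity
  have h8 : (0:ℝ) ≤ D / mt := by positivity
  simp only [mul_pow, div_pow, sqrt_pow4' h1, sqrt_pow4' h2, sqrt_pow4' h4,
    sqrt_pow4' h5, rpow4' h3, rpow4' h6, sqrt_pow4' h7, sqrt_pow4' h8]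
  field_simp

lemma keyE' (mR nR : ℝ) (hmR : 0 < mR) (hnR : 0 < nR) :
    nR / Real.sqrt (mR * nR) = Real.sqrt (nR / mR) := by
  apply eq_of_pow4' (by positivity) (by positivity)
  have h1 : (0:ℝ) ≤ mR * nR := by positivity
  have h2 : (0:ℝ) ≤ nR / mR := by positivity
  simp only [div_pow, sqrt_pow4' h1, sqrt_pow4' h2]
  field_simp

end helpers

/-- Lemma: multi-region bound on `‖M_r v‖_{ℓ∞}`. -/
theorem stmt8 (n d Rn : ℕ) (k : ℕ) (hn : 0 < n) (hd : 0 < d)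
    (mr nr : Fin Rn → ℕ) (hmr : ∀ t, 0 < mr t) (hnr : ∀ t, 0 < nr t)
    (I : Fin Rn → Finset (Fin n)) (hcard : ∀ t, (I t).card = nr t)
    (f : (t : Fin Rn) → Fin n → Fin (nr t))
    (hf : ∀ t, Set.BijOn (f t) ↑(I t) Set.univ)
    (Q : (t : Fin Rn) → Fin n → Matrix (Fin (mr t)) (Fin d) ℝ)
    (hQortho : ∀ t i, (Q t i)ᵀ * Q t i = 1)
    (P : Fin n → Fin Rn → Fin Rn → Matrix (Fin d) (Fin d) ℝ)
    (σs : Fin Rn → ℝ) (hσ : ∀ t, 0 < σs t)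
    (L Lstar S Sstar E : (t : Fin Rn) → Matrix (Fin (mr t)) (Fin (nr t)) ℝ)
    (hEdef : ∀ t, E t = Sstar t - S t)
    (α : Fin Rn → ℝ) (hα : ∀ t, 0 < α t) (α' : ℝ) (hα' : 0 < α')
    (ν l₀ s₀ q : ℝ) (hν : 0 < ν) (hl₀ : 0 < l₀) (hs₀ : 0 < s₀) (hq : 0 < q)
    (r : Fin Rn) (hIr : (I r).Nonempty)
    (Ibar : Fin n → Finset (Fin Rn))
    (hIbar : ∀ i, Ibar i = Finset.univ.filter fun t => i ∈ I t)
    (U : Finset (Fin Rn))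
    (hU : U = (I r).biUnion fun i => Finset.univ.filter fun t => i ∈ I t)
    (ω αt : ℝ)
    (hω : ω = ∑ t ∈ U, Real.sqrt (σs t / σs r) *
      (((mr t : ℝ) * nr r) / ((mr r : ℝ) * nr t)) ^ ((1 : ℝ) / 4))
    (hαt : αt = ∑ t ∈ U, α t * Real.sqrt (σs t / σs r) *
      (((mr t : ℝ) * nr r) / ((mr r : ℝ) * nr t)) ^ ((1 : ℝ) / 4))
    (h1 : ∀ i ∈ I r, ∀ t ∈ Ibar i,
      l2 ((Q t i)ᵀ *ᵥ fun p => (L t - Lstar t) p (f t i)) ≤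
        l₀ * σs t * q ^ k / Real.sqrt (nr t))
    (h2col : ∀ t ∈ U, ∀ j : Fin (nr t),
      ((Finset.univ.filter fun p => E t p j ≠ 0).card : ℝ) ≤ α t * mr t)
    (h2inf : ∀ t ∈ U, linf (E t) ≤ s₀ * σs t * q ^ k / Real.sqrt ((mr t : ℝ) * nr t))
    (h2row : ∀ p : Fin (mr r),
      ((Finset.univ.filter fun j => E r p j ≠ 0).card : ℝ) ≤ α' * nr r)
    (h3 : ∀ i ∈ I r, ∀ t ∈ Ibar i,
      spec (P i r t) ≤ Real.sqrt (σs r / σs t) *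
        (((mr t : ℝ) * nr t) / ((mr r : ℝ) * nr r)) ^ ((1 : ℝ) / 4))
    (h4 : ∀ (t : Fin Rn) (i : Fin n) (p : Fin (mr t)),
      l2 ((Q t i)ᵀ *ᵥ Pi.single p 1) ≤ ν * Real.sqrt ((d : ℝ) / mr t))
    (G F Mr : Matrix (Fin (mr r)) (Fin (nr r)) ℝ)
    (hG : G = ∑ i ∈ I r, ∑ t ∈ Ibar i, Matrix.vecMulVec
      ((Q r i * P i r t * (Q t i)ᵀ) *ᵥ fun p => (L t - Lstar t) p (f t i))
      (Pi.single (f r i) 1))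
    (hF : F = ∑ i ∈ I r, ∑ t ∈ Ibar i, Matrix.vecMulVec
      ((Q r i * P i r t * (Q t i)ᵀ) *ᵥ fun p => (S t - Sstar t) p (f t i))
      (Pi.single (f r i) 1))
    (hM : Mr = G + F + E r) :
    ∀ v : Fin (nr r) → ℝ,
      vinf (Mr *ᵥ v) ≤
        (s₀ * (α' + αt * ν ^ 2 * d) + l₀ * ν * Real.sqrt d * ω) *
          σs r * q ^ k * Real.sqrt ((nr r : ℝ) / mr r) * vinf v := by
  intro v
  haveI : Nonempty (Fin (mr r)) := ⟨⟨0, hmr r⟩⟩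
  haveI : Nonempty (Fin (nr r)) := ⟨⟨0, hnr r⟩⟩
  have hd0 : (0:ℝ) < (d:ℝ) := by exact_mod_cast hd
  have hmrc : ∀ t, (0:ℝ) < (mr t : ℝ) := fun t => by exact_mod_cast hmr t
  have hnrc : ∀ t, (0:ℝ) < (nr t : ℝ) := fun t => by exact_mod_cast hnr t
  have hqk : (0:ℝ) < q ^ k := pow_pos hq k
  have hvb : ∀ j, |v j| ≤ vinf v :=
    fun j => le_ciSup (f := fun j => |v j|) (Finite.bddAbove_range _) j
  have hv0 : 0 ≤ vinf v := le_trans (abs_nonneg _) (hvb ⟨0, hnr r⟩)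
  have hUsub : ∀ i ∈ I r, ∀ t ∈ Ibar i, t ∈ U := by
    intro i hi t ht
    rw [hIbar] at ht
    simp only [Finset.mem_filter, Finset.mem_univ, true_and] at ht
    rw [hU]
    exact Finset.mem_biUnion.mpr ⟨i, hi, by simp [ht]⟩
  have hrU : r ∈ U := by
    obtain ⟨i, hi⟩ := hIr
    exact hUsub i hi r (by rw [hIbar]; simp [hi])
  -- per-region bound terms
  set cL : Fin Rn → ℝ := fun t => ν * Real.sqrt ((d:ℝ) / mr r) *
    ((Real.sqrt (σs r / σs t) * (((mr t : ℝ) * nr t) / ((mr r : ℝ) * nr r)) ^ ((1:ℝ)/4)) *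
      (l₀ * σs t * q ^ k / Real.sqrt (nr t))) with hcLdef
  set cS : Fin Rn → ℝ := fun t => ν * Real.sqrt ((d:ℝ) / mr r) *
    ((Real.sqrt (σs r / σs t) * (((mr t : ℝ) * nr t) / ((mr r : ℝ) * nr r)) ^ ((1:ℝ)/4)) *
      ((α t * mr t) * (s₀ * σs t * q ^ k / Real.sqrt ((mr t : ℝ) * nr t)) *
        (ν * Real.sqrt ((d:ℝ) / mr t)))) with hcSdef
  have hcL0 : ∀ t, 0 ≤ cL t := fun t =>
    mul_nonneg (mul_nonneg hν.le (Real.sqrt_nonneg _))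
      (mul_nonneg (mul_nonneg (Real.sqrt_nonneg _) (Real.rpow_nonneg (by positivity) _))
        (div_nonneg (mul_nonneg (mul_nonneg hl₀.le (hσ t).le) hqk.le) (Real.sqrt_nonneg _)))
  have hcS0 : ∀ t, 0 ≤ cS t := fun t =>
    mul_nonneg (mul_nonneg hν.le (Real.sqrt_nonneg _))
      (mul_nonneg (mul_nonneg (Real.sqrt_nonneg _) (Real.rpow_nonneg (by positivity) _))
        (mul_nonneg (mul_nonneg (mul_nonneg (hα t).le (hmrc t).le)
          (div_nonneg (mul_nonneg (mul_nonneg hs₀.le (hσ t).le) hqk.le) (Real.sqrt_nonneg _)))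
          (mul_nonneg hν.le (Real.sqrt_nonneg _))))
  -- G bound
  have hGb : ∀ p, |(G *ᵥ v) p| ≤ (∑ i ∈ I r, ∑ t ∈ Ibar i, cL t) * vinf v := by
    intro p
    have hGv : (G *ᵥ v) p = ∑ i ∈ I r, ∑ t ∈ Ibar i,
        (((Q r i * P i r t * (Q t i)ᵀ) *ᵥ fun p' => (L t - Lstar t) p' (f t i)) p)
          * (Pi.single (f r i) (1:ℝ) ⬝ᵥ v) := by
      rw [hG]
      exact double_sum_mulVec' (I r) Ibar
        (fun i t => (Q r i * P i r t * (Q t i)ᵀ) *ᵥ fun p' => (L t - Lstar t) p' (f t i))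
        (fun i => Pi.single (f r i) 1) v p
    simp only [single_dotProduct, one_mul] at hGv
    rw [hGv, Finset.sum_mul]
    refine le_trans (Finset.abs_sum_le_sum_abs _ _) (Finset.sum_le_sum fun i hi => ?_)
    rw [Finset.sum_mul]
    refine le_trans (Finset.abs_sum_le_sum_abs _ _) (Finset.sum_le_sum fun t ht => ?_)
    rw [abs_mul]
    refine mul_le_mul ?_ (hvb _) (abs_nonneg _) (hcL0 t)
    calc |((Q r i * P i r t * (Q t i)ᵀ) *ᵥ fun p' => (L t - Lstar t) p' (f t i)) p|
        ≤ l2 ((Q r i)ᵀ *ᵥ Pi.single p 1) *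
            (spec (P i r t) * l2 ((Q t i)ᵀ *ᵥ fun p' => (L t - Lstar t) p' (f t i))) :=
          entry_bound' _ _ _ _ _
      _ ≤ cL t := by
          rw [hcLdef]
          refine mul_le_mul (h4 r i p) ?_
            (mul_nonneg (spec_nonneg' _) (l2_nonneg' _))
            (mul_nonneg hν.le (Real.sqrt_nonneg _))
          exact mul_le_mul (h3 i hi t ht) (h1 i hi t ht) (l2_nonneg' _)
            (mul_nonneg (Real.sqrt_nonneg _) (Real.rpow_nonneg (by positivity) _))
  -- F bound
  have hFb : ∀ p, |(F *ᵥ v) p| ≤ (∑ i ∈ I r, ∑ t ∈ Ibar i, cS t) * vinf v := by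
    intro p
    have hFv : (F *ᵥ v) p = ∑ i ∈ I r, ∑ t ∈ Ibar i,
        (((Q r i * P i r t * (Q t i)ᵀ) *ᵥ fun p' => (S t - Sstar t) p' (f t i)) p)
          * (Pi.single (f r i) (1:ℝ) ⬝ᵥ v) := by
      rw [hF]
      exact double_sum_mulVec' (I r) Ibar
        (fun i t => (Q r i * P i r t * (Q t i)ᵀ) *ᵥ fun p' => (S t - Sstar t) p' (f t i))
        (fun i => Pi.single (f r i) 1) v p
    simp only [single_dotProduct, one_mul] at hFv
    rw [hFv, Finset.sum_mul]
    refine le_trans (Finset.abs_sum_le_sum_abs _ _) (Finset.sum_le_sum fun i hi => ?_)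
    rw [Finset.sum_mul]
    refine le_trans (Finset.abs_sum_le_sum_abs _ _) (Finset.sum_le_sum fun t ht => ?_)
    rw [abs_mul]
    refine mul_le_mul ?_ (hvb _) (abs_nonneg _) (hcS0 t)
    have htU : t ∈ U := hUsub i hi t ht
    have hl2S : l2 ((Q t i)ᵀ *ᵥ fun p' => (S t - Sstar t) p' (f t i)) ≤
        (α t * mr t) * (s₀ * σs t * q ^ k / Real.sqrt ((mr t : ℝ) * nr t)) *
          (ν * Real.sqrt ((d:ℝ) / mr t)) := by
      refine l2_mulVec_sparse _ _ _ _ _ (h4 t i) ?_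
        (div_nonneg (mul_nonneg (mul_nonneg hs₀.le (hσ t).le) hqk.le) (Real.sqrt_nonneg _))
        (mul_nonneg hν.le (Real.sqrt_nonneg _))
        (mul_nonneg (hα t).le (hmrc t).le) ?_
      · intro p'
        have hEq : (S t - Sstar t) p' (f t i) = -(E t p' (f t i)) := by
          rw [hEdef]; simp [Matrix.sub_apply]
        rw [hEq, abs_neg]
        exact (linf_entry' (E t) p' (f t i)).trans (h2inf t htU)
      · have hfe : (Finset.univ.filter fun p' => (S t - Sstar t) p' (f t i) ≠ 0)
            = Finset.univ.filter fun p' => E t p' (f t i) ≠ 0 := by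
          refine Finset.filter_congr fun p' _ => ?_
          rw [hEdef]
          simp [Matrix.sub_apply, sub_ne_zero, ne_comm]
        rw [hfe]
        exact h2col t htU (f t i)
    calc |((Q r i * P i r t * (Q t i)ᵀ) *ᵥ fun p' => (S t - Sstar t) p' (f t i)) p|
        ≤ l2 ((Q r i)ᵀ *ᵥ Pi.single p 1) *
            (spec (P i r t) * l2 ((Q t i)ᵀ *ᵥ fun p' => (S t - Sstar t) p' (f t i))) :=
          entry_bound' _ _ _ _ _
      _ ≤ cS t := by
          rw [hcSdef]
          refine mul_le_mul (h4 r i p) ?_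
            (mul_nonneg (spec_nonneg' _) (l2_nonneg' _))
            (mul_nonneg hν.le (Real.sqrt_nonneg _))
          exact mul_le_mul (h3 i hi t ht) hl2S (l2_nonneg' _)
            (mul_nonneg (Real.sqrt_nonneg _) (Real.rpow_nonneg (by positivity) _))
  -- E bound
  have hlinfE0 : 0 ≤ s₀ * σs r * q ^ k / Real.sqrt ((mr r : ℝ) * nr r) :=
    div_nonneg (mul_nonneg (mul_nonneg hs₀.le (hσ r).le) hqk.le) (Real.sqrt_nonneg _)
  have hEb : ∀ p, |(E r *ᵥ v) p| ≤
      (α' * nr r) * ((s₀ * σs r * q ^ k / Real.sqrt ((mr r : ℝ) * nr r)) * vinf v) := by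
    intro p
    have hEv : (E r *ᵥ v) p = ∑ j, E r p j * v j := rfl
    have hsub : ∑ j, E r p j * v j
        = ∑ j ∈ Finset.univ.filter (fun j => E r p j ≠ 0), E r p j * v j := by
      symm
      refine Finset.sum_subset (Finset.subset_univ _) fun j _ hj => ?_
      have : E r p j = 0 := by
        by_contra h
        exact hj (by simp [h])
      simp [this]
    rw [hEv, hsub]
    calc |∑ j ∈ Finset.univ.filter (fun j => E r p j ≠ 0), E r p j * v j|
        ≤ ∑ j ∈ Finset.univ.filter (fun j => E r p j ≠ 0), |E r p j * v j| :=
          Finset.abs_sum_le_sum_abs _ _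
      _ ≤ ∑ _j ∈ Finset.univ.filter (fun j => E r p j ≠ 0),
            (s₀ * σs r * q ^ k / Real.sqrt ((mr r : ℝ) * nr r)) * vinf v := by
          refine Finset.sum_le_sum fun j _ => ?_
          rw [abs_mul]
          exact mul_le_mul ((linf_entry' (E r) p j).trans (h2inf r hrU)) (hvb j)
            (abs_nonneg _) hlinfE0
      _ = ((Finset.univ.filter (fun j => E r p j ≠ 0)).card : ℝ) *
            ((s₀ * σs r * q ^ k / Real.sqrt ((mr r : ℝ) * nr r)) * vinf v) := by
          simp [mul_comm]
      _ ≤ (α' * nr r) * ((s₀ * σs r * q ^ k / Real.sqrt ((mr r : ℝ) * nr r)) * vinf v) :=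
          mul_le_mul_of_nonneg_right (h2row p) (mul_nonneg hlinfE0 hv0)
  -- collapse double sums
  have hcollapse : ∀ (c : Fin Rn → ℝ), (∀ t, 0 ≤ c t) →
      ∑ i ∈ I r, ∑ t ∈ Ibar i, c t ≤ (nr r : ℝ) * ∑ t ∈ U, c t := by
    intro c hc
    calc ∑ i ∈ I r, ∑ t ∈ Ibar i, c t
        ≤ ∑ _i ∈ I r, ∑ t ∈ U, c t :=
          Finset.sum_le_sum fun i hi =>
            Finset.sum_le_sum_of_subset_of_nonneg (fun t ht => hUsub i hi t ht)
              (fun t _ _ => hc t)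
      _ = ((I r).card : ℝ) * ∑ t ∈ U, c t := by
          rw [Finset.sum_const, nsmul_eq_mul]
      _ = (nr r : ℝ) * ∑ t ∈ U, c t := by rw [hcard r]
  -- key algebraic identities
  have hGsum : (nr r : ℝ) * ∑ t ∈ U, cL t
      = (l₀ * ν * Real.sqrt d * ω) * (σs r * q ^ k * Real.sqrt ((nr r : ℝ) / mr r)) := by
    calc (nr r : ℝ) * ∑ t ∈ U, cL t = ∑ t ∈ U, (nr r : ℝ) * cL t := Finset.mul_sum _ _ _
      _ = ∑ t ∈ U, (l₀ * ν * (σs r * q ^ k * Real.sqrt ((nr r : ℝ) / mr r)) * Real.sqrt d) *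
            (Real.sqrt (σs t / σs r) *
              (((mr t : ℝ) * nr r) / ((mr r : ℝ) * nr t)) ^ ((1 : ℝ) / 4)) := by
          refine Finset.sum_congr rfl fun t _ => ?_
          have hk := keyG' (d : ℝ) (mr t) (nr t) (mr r) (nr r) (σs r) (σs t) hd0.le
            (hmrc t) (hnrc t) (hmrc r) (hnrc r) (hσ r) (hσ t)
          simp only [hcLdef]
          linear_combination (l₀ * ν * q ^ k) * hk
      _ = (l₀ * ν * Real.sqrt d * ω) * (σs r * q ^ k * Real.sqrt ((nr r : ℝ) / mr r)) := by
          rw [hω, ← Finset.mul_sum]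
          ring
  have hFsum : (nr r : ℝ) * ∑ t ∈ U, cS t
      = (s₀ * αt * ν ^ 2 * d) * (σs r * q ^ k * Real.sqrt ((nr r : ℝ) / mr r)) := by
    calc (nr r : ℝ) * ∑ t ∈ U, cS t = ∑ t ∈ U, (nr r : ℝ) * cS t := Finset.mul_sum _ _ _
      _ = ∑ t ∈ U, (s₀ * ν ^ 2 * (d : ℝ) * (σs r * q ^ k * Real.sqrt ((nr r : ℝ) / mr r))) *
            (α t * Real.sqrt (σs t / σs r) *
              (((mr t : ℝ) * nr r) / ((mr r : ℝ) * nr t)) ^ ((1 : ℝ) / 4)) := by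
          refine Finset.sum_congr rfl fun t _ => ?_
          have hk := keyF' (d : ℝ) (mr t) (nr t) (mr r) (nr r) (σs r) (σs t) hd0.le
            (hmrc t) (hnrc t) (hmrc r) (hnrc r) (hσ r) (hσ t)
          simp only [hcSdef]
          linear_combination (s₀ * α t * ν ^ 2 * q ^ k) * hk
      _ = (s₀ * αt * ν ^ 2 * d) * (σs r * q ^ k * Real.sqrt ((nr r : ℝ) / mr r)) := by
          rw [← Finset.mul_sum, ← hαt]
          ring
  have hEsum : (α' * (nr r : ℝ)) * (s₀ * σs r * q ^ k / Real.sqrt ((mr r : ℝ) * nr r))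
      = (s₀ * α') * (σs r * q ^ k * Real.sqrt ((nr r : ℝ) / mr r)) := by
    have hk := keyE' (mr r : ℝ) (nr r : ℝ) (hmrc r) (hnrc r)
    linear_combination (α' * s₀ * σs r * q ^ k) * hk
  -- final assembly
  refine ciSup_le fun p => ?_
  have hM1 : (Mr *ᵥ v) p = (G *ᵥ v) p + (F *ᵥ v) p + (E r *ᵥ v) p := by
    rw [hM]
    simp [Matrix.add_mulVec]
  calc |(Mr *ᵥ v) p|
      ≤ |(G *ᵥ v) p| + |(F *ᵥ v) p| + |(E r *ᵥ v) p| := by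
        rw [hM1]
        exact (abs_add_le _ _).trans (add_le_add_left (abs_add_le _ _) _)
    _ ≤ (∑ i ∈ I r, ∑ t ∈ Ibar i, cL t) * vinf v + (∑ i ∈ I r, ∑ t ∈ Ibar i, cS t) * vinf v
          + (α' * nr r) * ((s₀ * σs r * q ^ k / Real.sqrt ((mr r : ℝ) * nr r)) * vinf v) :=
        add_le_add (add_le_add (hGb p) (hFb p)) (hEb p)
    _ ≤ ((nr r : ℝ) * ∑ t ∈ U, cL t) * vinf v + ((nr r : ℝ) * ∑ t ∈ U, cS t) * vinf v
          + (α' * nr r) * ((s₀ * σs r * q ^ k / Real.sqrt ((mr r : ℝ) * nr r)) * vinf v) := by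
        refine add_le_add (add_le_add ?_ ?_) le_rfl
        · exact mul_le_mul_of_nonneg_right (hcollapse cL hcL0) hv0
        · exact mul_le_mul_of_nonneg_right (hcollapse cS hcS0) hv0
    _ = (s₀ * (α' + αt * ν ^ 2 * d) + l₀ * ν * Real.sqrt d * ω) *
          σs r * q ^ k * Real.sqrt ((nr r : ℝ) / mr r) * vinf v := by
        linear_combination vinf v * hGsum + vinf v * hFsum + vinf v * hEsum
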